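/- The Stieltjes transform S of the semicircle distribution satisfies the quadratic equation S(z)² + z S(z) + 1 = 0 for all z in the upper half plane, and is explicitly given by S(z) = (-z + √(z²-4))/2 (with the branch chosen so that S(z) ∈ ℂ⁺). -/

import Mathlib

open MeasureTheory

/-- The semicircle distribution, with density `(1/(2π))√(4-t²)` on `[-2,2]`. -/
noncomputable def semicircleMeasure : Measure ℝ :=
  volume.withDensity fun t => ENNReal.ofReal ((1 / (2 * Real.pi)) * Real.sqrt (4 - t ^ 2))

/-- The Stieltjes transform of the semicircle distribution. -/
noncomputable def semicircleStieltjes (z : ℂ) : ℂ :=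
  ∫ t : ℝ, ((t : ℂ) - z)⁻¹ ∂semicircleMeasure

namespace SemicircleAux

open intervalIntegral Set Complex

noncomputable def sc (t : ℝ) : ℝ := Real.sqrt (4 - t ^ 2)

noncomputable def tau (t : ℝ) : ℂ := ((t : ℂ) + (sc t : ℂ) * Complex.I) / 2

noncomputable def uu (ω : ℂ) (t : ℝ) : ℂ := 2 * (ω * tau t - 1) / (ω - tau t)

noncomputable def GG (ω z : ℂ) (t : ℝ) : ℂ :=
  (sc t : ℂ) - z * (Real.arcsin (t / 2) : ℂ)
    + Complex.I * (ω - ω⁻¹) * Complex.log (-Complex.I * uu ω t)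

lemma sc_nonneg (t : ℝ) : 0 ≤ sc t := Real.sqrt_nonneg _

lemma sc_sq {t : ℝ} (ht : t ∈ Icc (-2:ℝ) 2) : sc t ^ 2 = 4 - t ^ 2 := by
  have h : (0:ℝ) ≤ 4 - t ^ 2 := by nlinarith [ht.1, ht.2]
  simpa [sc] using Real.sq_sqrt h

lemma normSq_tau {t : ℝ} (ht : t ∈ Icc (-2:ℝ) 2) : Complex.normSq (tau t) = 1 := by
  have h := sc_sq ht
  simp only [tau, Complex.normSq_apply]
  simp [Complex.div_re, Complex.div_im, Complex.normSq_apply, Complex.add_re, Complex.add_im]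
  nlinarith [h]

lemma abs_tau {t : ℝ} (ht : t ∈ Icc (-2:ℝ) 2) : ‖(tau t)‖ = 1 := by
  have := normSq_tau ht
  rw [← Complex.sq_norm] at this
  nlinarith [norm_nonneg (tau t)]

lemma tau_ne_zero {t : ℝ} (ht : t ∈ Icc (-2:ℝ) 2) : tau t ≠ 0 := by
  intro h
  have := abs_tau ht
  rw [h] at this
  simp at this

variable {ω z : ℂ}

lemma omega_sub_tau_ne (hω : 1 < ‖ω‖) {t : ℝ} (ht : t ∈ Icc (-2:ℝ) 2) :
    ω - tau t ≠ 0 := by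
  intro h
  have h2 : ω = tau t := by linear_combination h
  rw [h2, abs_tau ht] at hω
  exact lt_irrefl _ hω

lemma omega_mul_tau_ne (hω : 1 < ‖ω‖) {t : ℝ} (ht : t ∈ Icc (-2:ℝ) 2) :
    ω * tau t - 1 ≠ 0 := by
  intro h
  have h2 : ω * tau t = 1 := by linear_combination h
  have := congrArg (‖·‖) h2
  rw [norm_mul, abs_tau ht, norm_one, mul_one] at this
  rw [this] at hω
  exact lt_irrefl _ hω

lemma continuous_tau : Continuous tau := by
  unfold tau sc
  fun_prop

lemma continuousOn_uu (hω : 1 < ‖ω‖) :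
    ContinuousOn (uu ω) (Icc (-2:ℝ) 2) := by
  unfold uu
  exact ((continuous_const.mul ((continuous_const.mul continuous_tau).sub
    continuous_const)).continuousOn).div
    ((continuous_const.sub continuous_tau).continuousOn)
    (fun t ht => omega_sub_tau_ne hω ht)

lemma im_uu_pos (hω : 1 < ‖ω‖) {t : ℝ} (ht : t ∈ Ioo (-2:ℝ) 2) :
    0 < (uu ω t).im := by
  have htc : t ∈ Icc (-2:ℝ) 2 := Ioo_subset_Icc_self ht
  have hsc : 0 < sc t := Real.sqrt_pos.mpr (by nlinarith [ht.1, ht.2])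
  have hns : Complex.normSq (tau t) = 1 := normSq_tau htc
  have hnsω : 1 < Complex.normSq ω := by
    rw [← Complex.sq_norm]; nlinarith [hω]
  have hden : 0 < Complex.normSq (ω - tau t) :=
    Complex.normSq_pos.mpr (omega_sub_tau_ne hω htc)
  have him : (tau t).im = sc t / 2 := by simp [tau]
  rw [uu, Complex.div_im]
  rw [div_sub_div_same]
  apply div_pos _ hden
  have hns' : (tau t).re ^ 2 + (tau t).im ^ 2 = 1 := by
    rw [← hns]; simp [Complex.normSq_apply]; ring
  have hnsω' : 1 < ω.re ^ 2 + ω.im ^ 2 := by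
    rw [Complex.normSq_apply] at hnsω; nlinarith [hnsω]
  have h1 : (2 * (ω * tau t - 1)).im = 2 * (ω.re * (tau t).im + ω.im * (tau t).re) := by
    simp [Complex.mul_im, Complex.mul_re]
  have h2 : (2 * (ω * tau t - 1)).re = 2 * (ω.re * (tau t).re - ω.im * (tau t).im) - 2 := by
    simp [Complex.mul_re]; ring
  have h3 : (ω - tau t).re = ω.re - (tau t).re := by simp
  have h4 : (ω - tau t).im = ω.im - (tau t).im := by simp
  rw [h1, h2, h3, h4]
  have htim : 0 < (tau t).im := by rw [him]; positivity
  have hE : 2 * (ω.re * (tau t).im + ω.im * (tau t).re) * (ω.re - (tau t).re) -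
        (2 * (ω.re * (tau t).re - ω.im * (tau t).im) - 2) * (ω.im - (tau t).im)
      = 2 * (tau t).im * (ω.re ^ 2 + ω.im ^ 2 - 1)
        - 2 * ω.im * ((tau t).re ^ 2 + (tau t).im ^ 2 - 1) := by ring
  rw [hE, show (tau t).re ^ 2 + (tau t).im ^ 2 - 1 = 0 by linarith]
  nlinarith [mul_pos htim (sub_pos.mpr hnsω')]

lemma tau_two : tau 2 = 1 := by
  have h : sc 2 = 0 := by norm_num [sc]
  rw [tau, h]
  push_cast
  norm_num

lemma tau_neg_two : tau (-2) = -1 := by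
  have h : sc (-2) = 0 := by norm_num [sc]
  rw [tau, h]
  push_cast
  norm_num

lemma uu_two (hω : 1 < ‖ω‖) : uu ω 2 = 2 := by
  have h1 : ω - 1 ≠ 0 := by
    intro h
    have : ω = 1 := by linear_combination h
    rw [this] at hω; simp at hω
  rw [uu, tau_two]
  field_simp

lemma uu_neg_two (hω : 1 < ‖ω‖) : uu ω (-2) = -2 := by
  have h1 : ω + 1 ≠ 0 := by
    intro h
    have : ω = -1 := by linear_combination h
    rw [this] at hω; simp at hω
  rw [uu, tau_neg_two]
  rw [div_eq_iff (by rwa [sub_neg_eq_add])]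
  ring

lemma slit (hω : 1 < ‖ω‖) {t : ℝ} (ht : t ∈ Icc (-2:ℝ) 2) :
    -Complex.I * uu ω t ∈ Complex.slitPlane := by
  rw [Complex.mem_slitPlane_iff]
  rcases eq_or_lt_of_le ht.1 with h | h1
  · right
    rw [← h, uu_neg_two hω]
    simp [Complex.mul_im]
  rcases eq_or_lt_of_le ht.2 with h | h2
  · right
    rw [h, uu_two hω]
    simp [Complex.mul_im]
  · left
    have := im_uu_pos hω ⟨h1, h2⟩
    simpa [Complex.mul_re] using this


end SemicircleAux

namespace SemicircleAux

open intervalIntegral Set Complex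

variable {ω z : ℂ}

lemma tz_ne (hz : 0 < z.im) (t : ℝ) : (t : ℂ) - z ≠ 0 := by
  intro h
  have : ((t : ℂ) - z).im = 0 := by rw [h]; simp
  simp only [Complex.sub_im, Complex.ofReal_im] at this
  linarith

lemma hasDerivAt_GG (hz : 0 < z.im) (hω0 : ω ≠ 0) (hω : 1 < ‖ω‖)
    (hzω : z = ω + ω⁻¹) {t : ℝ} (ht : t ∈ Ioo (-2:ℝ) 2) :
    HasDerivAt (GG ω z) ((sc t : ℂ) * ((t : ℂ) - z)⁻¹) t := by
  have htc : t ∈ Icc (-2:ℝ) 2 := Ioo_subset_Icc_self ht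
  have h4 : 0 < 4 - t ^ 2 := by nlinarith [ht.1, ht.2]
  have hspos : 0 < sc t := Real.sqrt_pos.mpr h4
  have hsne : sc t ≠ 0 := ne_of_gt hspos
  have hs2 : sc t ^ 2 = 4 - t ^ 2 := sc_sq htc
  have hscc : ((sc t : ℝ) : ℂ) ≠ 0 := by exact_mod_cast hsne
  have hune : ω - tau t ≠ 0 := omega_sub_tau_ne hω htc
  have hmne : ω * tau t - 1 ≠ 0 := omega_mul_tau_ne hω htc
  -- derivative of sc
  have hsd : HasDerivAt sc (-t / sc t) t := by
    have h1 : HasDerivAt (fun y : ℝ => 4 - y ^ 2) (-(2 * t)) t := by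
      simpa using ((hasDerivAt_pow 2 t).const_sub 4)
    have h2 := (Real.hasDerivAt_sqrt (ne_of_gt h4)).comp t h1
    refine h2.congr_deriv (Eq.symm ?_)
    unfold sc
    field_simp
  -- derivative of tau
  have hτd : HasDerivAt tau (-Complex.I * tau t / (sc t : ℂ)) t := by
    have h1 : HasDerivAt (fun y : ℝ => ((y : ℂ) + (sc y : ℂ) * Complex.I) / 2)
        ((1 + ((-t / sc t : ℝ) : ℂ) * Complex.I) / 2) t :=
      (((hasDerivAt_id t).ofReal_comp).add ((hsd.ofReal_comp).mul_const Complex.I)).div_const 2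
    have h2 : ((1 : ℂ) + ((-t / sc t : ℝ) : ℂ) * Complex.I) / 2
        = -Complex.I * tau t / (sc t : ℂ) := by
      rw [tau]
      push_cast
      field_simp
      linear_combination ((sc t : ℂ)) * Complex.I_sq
    rw [← h2]
    exact h1
  -- derivative of uu
  have hud : HasDerivAt (uu ω)
      (2 * (ω ^ 2 - 1) * (-Complex.I * tau t / (sc t : ℂ)) / (ω - tau t) ^ 2) t := by
    have h1 : HasDerivAt (fun y => 2 * (ω * tau y - 1))
        (2 * (ω * (-Complex.I * tau t / (sc t : ℂ)))) t :=
      ((hτd.const_mul ω).sub_const 1).const_mul 2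
    have h2 : HasDerivAt (fun y => ω - tau y) (-(-Complex.I * tau t / (sc t : ℂ))) t :=
      hτd.const_sub ω
    have h3 := h1.div h2 hune
    refine h3.congr_deriv (Eq.symm ?_)
    field_simp
    ring
  -- derivative of the log term
  have hIu : -Complex.I * uu ω t ≠ 0 := Complex.slitPlane_ne_zero (slit hω htc)
  have hlog : HasDerivAt (fun y => Complex.log (-Complex.I * uu ω y))
      ((-Complex.I * (2 * (ω ^ 2 - 1) * (-Complex.I * tau t / (sc t : ℂ)) / (ω - tau t) ^ 2))
        / (-Complex.I * uu ω t)) t :=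
    HasDerivAt.clog_real (hud.const_mul (-Complex.I)) (slit hω htc)
  -- derivative of arcsin(t/2)
  have harc : HasDerivAt (fun y : ℝ => Real.arcsin (y / 2)) (1 / sc t) t := by
    have h1 : t / 2 ≠ -1 := by intro h; rw [div_eq_iff (by norm_num : (2:ℝ) ≠ 0)] at h; nlinarith [ht.1]
    have h2 : t / 2 ≠ 1 := by intro h; rw [div_eq_iff (by norm_num : (2:ℝ) ≠ 0)] at h; nlinarith [ht.2]
    have h3 := (Real.hasDerivAt_arcsin h1 h2).comp t ((hasDerivAt_id t).div_const 2)
    refine h3.congr_deriv (Eq.symm ?_)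
    have h5 : Real.sqrt (1 - (t / 2) ^ 2) = sc t / 2 := by
      rw [show (1 - (t / 2) ^ 2 : ℝ) = (4 - t ^ 2) / 4 by ring]
      rw [show ((4 - t^2) / 4 : ℝ) = (sc t / 2) ^ 2 by rw [div_pow, hs2]; norm_num]
      exact Real.sqrt_sq (by positivity)
    rw [h5]
    field_simp
  -- assemble
  have hG := ((hsd.ofReal_comp).sub ((harc.ofReal_comp).const_mul z)).add
      (hlog.const_mul (Complex.I * (ω - ω⁻¹)))
  have hGG : GG ω z = fun y => (((sc y : ℝ) : ℂ) - z * ((Real.arcsin (y / 2) : ℝ) : ℂ))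
      + Complex.I * (ω - ω⁻¹) * Complex.log (-Complex.I * uu ω y) := by
    funext y; rw [GG]
  rw [hGG]
  refine hG.congr_deriv (Eq.symm ?_)
  have htz : (t : ℂ) - z ≠ 0 := tz_ne hz t
  have hs2c : ((sc t : ℝ) : ℂ) ^ 2 = 4 - (t : ℂ) ^ 2 := by
    rw [show ((sc t : ℝ) : ℂ) ^ 2 = ((sc t ^ 2 : ℝ) : ℂ) by push_cast; ring, hs2]
    push_cast; ring
  simp only [uu]
  push_cast
  set σ := tau t with hσ
  have htt : σ * (((t : ℂ) - ((sc t : ℝ) : ℂ) * Complex.I) / 2) = 1 := by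
    rw [hσ, tau]
    linear_combination (-(((sc t : ℝ) : ℂ)) ^ 2 / 4) * Complex.I_sq + (1 / 4) * hs2c
  have hinv : σ⁻¹ = ((t : ℂ) - ((sc t : ℝ) : ℂ) * Complex.I) / 2 :=
    inv_eq_of_mul_eq_one_right htt
  have hσ0 : σ ≠ 0 := by rw [hσ]; exact tau_ne_zero htc
  have hT : (t : ℂ) = σ + σ⁻¹ := by rw [hinv, hσ, tau]; ring
  have hS : ((sc t : ℝ) : ℂ) = -Complex.I * (σ - σ⁻¹) := by
    rw [hinv, hσ, tau]
    linear_combination ((sc t : ℝ) : ℂ) * Complex.I_sq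
  have hIne : Complex.I ≠ 0 := Complex.I_ne_zero
  have hσd : σ - σ⁻¹ ≠ 0 := by
    intro h
    apply hscc
    rw [hS, h, mul_zero]
  have e1 : -Complex.I * (2 * (ω ^ 2 - 1) * (-Complex.I * σ / ((sc t : ℝ) : ℂ)) / (ω - σ) ^ 2)
        / (-Complex.I * (2 * (ω * σ - 1) / (ω - σ)))
      = -Complex.I * σ * (ω ^ 2 - 1) / (((sc t : ℝ) : ℂ) * (ω - σ) * (ω * σ - 1)) := by
    field_simp
  have hkey : (t : ℂ) - z = -((ω - σ) * (ω * σ - 1)) / (ω * σ) := by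
    rw [hT, hzω]
    field_simp
    ring
  have e2 : Complex.I * (ω - ω⁻¹) *
        (-Complex.I * σ * (ω ^ 2 - 1) / (((sc t : ℝ) : ℂ) * (ω - σ) * (ω * σ - 1)))
      = σ * (ω - ω⁻¹) * (ω ^ 2 - 1) / (((sc t : ℝ) : ℂ) * (ω - σ) * (ω * σ - 1)) := by
    rw [← mul_div_assoc]
    congr 1
    linear_combination (-σ * (ω - ω⁻¹) * (ω ^ 2 - 1)) * Complex.I_sq
  have hs4 : ((sc t : ℝ) : ℂ) ^ 2 * σ ^ 2 = -(σ ^ 2 - 1) ^ 2 := by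
    rw [hs2c, hT]
    field_simp
    ring
  rw [e1, e2, hkey, hzω, hT]
  field_simp
  linear_combination (-ω ^ 2) * hs4
end SemicircleAux

namespace SemicircleAux

open intervalIntegral Set Complex

variable {ω z : ℂ}

lemma continuousOn_GG (hω : 1 < ‖ω‖) :
    ContinuousOn (GG ω z) (Icc (-2:ℝ) 2) := by
  have hsc : Continuous fun t : ℝ => ((sc t : ℝ) : ℂ) := by
    unfold sc; fun_prop
  have harc : Continuous fun t : ℝ => ((Real.arcsin (t / 2) : ℝ) : ℂ) :=
    Complex.continuous_ofReal.comp (Real.continuous_arcsin.comp (continuous_id.div_const 2))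
  unfold GG
  apply ContinuousOn.add
  · exact (hsc.continuousOn).sub (continuous_const.mul harc).continuousOn
  · apply ContinuousOn.mul continuousOn_const
    intro t ht
    exact ContinuousWithinAt.clog
      ((continuousWithinAt_const).mul ((continuousOn_uu hω) t ht)) (slit hω ht)

lemma integrand_continuousOn (hz : 0 < z.im) :
    ContinuousOn (fun t : ℝ => ((sc t : ℝ) : ℂ) * ((t : ℂ) - z)⁻¹) (Icc (-2:ℝ) 2) := by
  apply ContinuousOn.mul
  · unfold sc; fun_prop
  · apply ContinuousOn.inv₀
    · fun_prop
    · exact fun t _ => tz_ne hz t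

lemma GG_two (hω0 : ω ≠ 0) (hω : 1 < ‖ω‖) :
    GG ω z 2 = -z * (Real.pi / 2 : ℝ)
      + Complex.I * (ω - ω⁻¹) * ((Real.log 2 : ℝ) - Real.pi / 2 * Complex.I) := by
  have h0 : sc 2 = 0 := by norm_num [sc]
  have harc : Real.arcsin (2 / 2) = Real.pi / 2 := by norm_num [Real.arcsin_one]
  have hlog : Complex.log (-Complex.I * uu ω 2) = (Real.log 2 : ℝ) - Real.pi / 2 * Complex.I := by
    rw [uu_two hω, show -Complex.I * 2 = ((2:ℝ):ℂ) * -Complex.I by push_cast; ring,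
      Complex.log_ofReal_mul (by norm_num) (by simp), Complex.log_neg_I]
    ring
  rw [GG, h0, harc, hlog]
  push_cast
  ring

lemma GG_neg_two (hω0 : ω ≠ 0) (hω : 1 < ‖ω‖) :
    GG ω z (-2) = z * (Real.pi / 2 : ℝ)
      + Complex.I * (ω - ω⁻¹) * ((Real.log 2 : ℝ) + Real.pi / 2 * Complex.I) := by
  have h0 : sc (-2) = 0 := by norm_num [sc]
  have harc : Real.arcsin (-2 / 2) = -(Real.pi / 2) := by norm_num [Real.arcsin_neg_one]
  have hlog : Complex.log (-Complex.I * uu ω (-2)) = (Real.log 2 : ℝ) + Real.pi / 2 * Complex.I := by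
    rw [uu_neg_two hω, show -Complex.I * (-2) = ((2:ℝ):ℂ) * Complex.I by push_cast; ring,
      Complex.log_ofReal_mul (by norm_num) Complex.I_ne_zero, Complex.log_I]
  rw [GG, h0, harc, hlog]
  push_cast
  ring

lemma integral_eval (hz : 0 < z.im) (hω0 : ω ≠ 0) (hω : 1 < ‖ω‖)
    (hzω : z = ω + ω⁻¹) :
    ∫ t in (-2:ℝ)..2, ((Real.sqrt (4 - t ^ 2) : ℝ) : ℂ) * ((t : ℂ) - z)⁻¹
      = (Real.pi : ℂ) * (ω - ω⁻¹ - z) := by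
  have hint : IntervalIntegrable (fun t : ℝ => ((sc t : ℝ) : ℂ) * ((t : ℂ) - z)⁻¹)
      volume (-2 : ℝ) 2 := by
    apply ContinuousOn.intervalIntegrable
    have : uIcc (-2:ℝ) 2 = Icc (-2:ℝ) 2 := uIcc_of_le (by norm_num)
    rw [this]
    exact integrand_continuousOn hz
  have h := intervalIntegral.integral_eq_sub_of_hasDeriv_right_of_le (by norm_num : (-2:ℝ) ≤ 2)
    (continuousOn_GG hω) (fun t ht => (hasDerivAt_GG hz hω0 hω hzω ht).hasDerivWithinAt) hint
  have : ∫ t in (-2:ℝ)..2, ((Real.sqrt (4 - t ^ 2) : ℝ) : ℂ) * ((t : ℂ) - z)⁻¹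
      = ∫ t in (-2:ℝ)..2, ((sc t : ℝ) : ℂ) * ((t : ℂ) - z)⁻¹ := rfl
  rw [this, h, GG_two hω0 hω, GG_neg_two hω0 hω]
  have hπ : ((Real.pi : ℝ) : ℂ) = (Real.pi : ℂ) := rfl
  push_cast
  linear_combination (-(Real.pi : ℂ)) * (ω - ω⁻¹) * Complex.I_sq

end SemicircleAux

namespace SemicircleAux

open Set Complex

lemma stieltjes_reduction (z : ℂ) :
    semicircleStieltjes z
      = ((1 / (2 * Real.pi) : ℝ) : ℂ)
          * ∫ t in (-2:ℝ)..2, ((Real.sqrt (4 - t ^ 2) : ℝ) : ℂ) * ((t : ℂ) - z)⁻¹ := by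
  have hg : ∀ t : ℝ, (0:ℝ) ≤ 1 / (2 * Real.pi) * Real.sqrt (4 - t ^ 2) := by
    intro t
    have := Real.pi_pos
    positivity
  have hmeas : Measurable fun t : ℝ =>
      Real.toNNReal (1 / (2 * Real.pi) * Real.sqrt (4 - t ^ 2)) := by
    apply Continuous.measurable
    apply continuous_real_toNNReal.comp
    exact continuous_const.mul (Real.continuous_sqrt.comp (by fun_prop))
  rw [semicircleStieltjes, semicircleMeasure]
  rw [show (fun t : ℝ => ENNReal.ofReal (1 / (2 * Real.pi) * Real.sqrt (4 - t ^ 2)))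
      = fun t : ℝ => ((Real.toNNReal (1 / (2 * Real.pi) * Real.sqrt (4 - t ^ 2)) : NNReal)
        : ENNReal) from rfl]
  rw [integral_withDensity_eq_integral_smul hmeas]
  have hindic : (fun t : ℝ =>
      (Real.toNNReal (1 / (2 * Real.pi) * Real.sqrt (4 - t ^ 2))) • ((t : ℂ) - z)⁻¹)
      = Set.indicator (Set.Ioc (-2:ℝ) 2)
          (fun t => ((1 / (2 * Real.pi) * Real.sqrt (4 - t ^ 2) : ℝ) : ℂ) * ((t : ℂ) - z)⁻¹)
      := by
    funext t
    by_cases ht : t ∈ Set.Ioc (-2:ℝ) 2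
    · rw [Set.indicator_of_mem ht, NNReal.smul_def, Real.coe_toNNReal _ (hg t),
        Complex.real_smul]
    · rw [Set.indicator_of_notMem ht]
      have h4 : 4 - t ^ 2 ≤ 0 := by
        rcases not_and_or.mp ht with h | h
        · push_neg at h; nlinarith [h]
        · push_neg at h; nlinarith [h]
      have : Real.sqrt (4 - t ^ 2) = 0 := Real.sqrt_eq_zero_of_nonpos h4
      simp [this]
  rw [hindic, MeasureTheory.integral_indicator measurableSet_Ioc,
    ← intervalIntegral.integral_of_le (by norm_num : (-2:ℝ) ≤ 2)]
  rw [← intervalIntegral.integral_const_mul]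
  congr 1
  funext t
  push_cast
  ring

end SemicircleAux

/-- On the upper half plane, the Stieltjes transform `S` of the semicircle
distribution satisfies `S(z)² + z S(z) + 1 = 0`, takes values in the upper half
plane, and is the unique solution of this quadratic equation lying in `ℂ⁺`
(i.e. it equals `(-z + √(z²-4))/2` with the branch of the square root chosen
so that `S(z) ∈ ℂ⁺`). -/
theorem semicircle_stieltjes_transform (z : ℂ) (hz : 0 < z.im) :
    0 < (semicircleStieltjes z).im ∧
    (semicircleStieltjes z) ^ 2 + z * semicircleStieltjes z + 1 = 0 ∧
    ∀ w : ℂ, 0 < w.im → w ^ 2 + z * w + 1 = 0 → w = semicircleStieltjes z := by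
  -- construct ω with z = ω + ω⁻¹ and |ω| > 1
  obtain ⟨d, hd⟩ : ∃ d : ℂ, d ^ 2 = z ^ 2 - 4 :=
    ⟨(z ^ 2 - 4) ^ ((2:ℕ):ℂ)⁻¹, Complex.cpow_nat_inv_pow _ two_ne_zero⟩
  set ω₁ := (z + d) / 2 with hω₁
  set ω₂ := (z - d) / 2 with hω₂
  have hprod : ω₁ * ω₂ = 1 := by
    rw [hω₁, hω₂]
    linear_combination (-1/4 : ℂ) * hd
  have hsum : ω₁ + ω₂ = z := by rw [hω₁, hω₂]; ring
  have h10 : ω₁ ≠ 0 := left_ne_zero_of_mul_eq_one hprod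
  have h20 : ω₂ ≠ 0 := right_ne_zero_of_mul_eq_one hprod
  have habs : ‖ω₁‖ * ‖ω₂‖ = 1 := by
    rw [← norm_mul, hprod, norm_one]
  have hnot1 : ∀ ω : ℂ, ω ≠ 0 → z = ω + ω⁻¹ → ‖ω‖ ≠ 1 := by
    intro ω h0 hzs habs1
    have hconj : ω⁻¹ = (starRingEnd ℂ) ω := Complex.inv_eq_conj habs1
    have : z.im = 0 := by
      rw [hzs, Complex.add_im, hconj, Complex.conj_im]
      ring
    linarith
  have hz1 : z = ω₁ + ω₁⁻¹ := by
    rw [show ω₁⁻¹ = ω₂ from inv_eq_of_mul_eq_one_right hprod, hsum]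
  have hz2 : z = ω₂ + ω₂⁻¹ := by
    rw [show ω₂⁻¹ = ω₁ from inv_eq_of_mul_eq_one_right (by rw [mul_comm]; exact hprod)]
    rw [← hsum]; ring
  obtain ⟨ω, hω0, hωabs, hzω⟩ : ∃ ω : ℂ, ω ≠ 0 ∧ 1 < ‖ω‖ ∧ z = ω + ω⁻¹ := by
    rcases lt_trichotomy (‖ω₁‖) 1 with h | h | h
    · refine ⟨ω₂, h20, ?_, hz2⟩
      have h1pos : 0 < ‖ω₁‖ := norm_pos_iff.mpr h10
      nlinarith [habs, h1pos]
    · exact absurd h (hnot1 ω₁ h10 hz1)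
    · exact ⟨ω₁, h10, h, hz1⟩
  -- the value of the Stieltjes transform
  have hval : semicircleStieltjes z = -ω⁻¹ := by
    rw [SemicircleAux.stieltjes_reduction z, SemicircleAux.integral_eval hz hω0 hωabs hzω]
    have hπ : (Real.pi : ℂ) ≠ 0 := by
      exact_mod_cast Real.pi_ne_zero
    rw [hzω]
    push_cast
    field_simp
    ring
  -- positivity of the imaginary part
  have hnsω : 1 < Complex.normSq ω := by
    rw [← Complex.sq_norm]
    nlinarith [hωabs]
  have hωim : 0 < ω.im := by
    have him : z.im = ω.im * (1 - (Complex.normSq ω)⁻¹) := by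
      rw [hzω, Complex.add_im, Complex.inv_im]
      field_simp
      ring
    have hfac : 0 < 1 - (Complex.normSq ω)⁻¹ := by
      have h0 : (0:ℝ) < Complex.normSq ω := by linarith
      have : (Complex.normSq ω)⁻¹ < 1 := by
        rw [inv_lt_one₀ h0]
        exact hnsω
      linarith
    nlinarith [him, hfac, hz]
  have him : 0 < (semicircleStieltjes z).im := by
    rw [hval]
    rw [Complex.neg_im, Complex.inv_im]
    have : 0 < Complex.normSq ω := by positivity
    rw [neg_div, neg_neg]
    positivity
  have hquad : (semicircleStieltjes z) ^ 2 + z * semicircleStieltjes z + 1 = 0 := by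
    rw [hval, hzω]
    have hx : ω⁻¹ * ω = 1 := inv_mul_cancel₀ hω0
    linear_combination (-1 : ℂ) * hx
  refine ⟨him, hquad, ?_⟩
  intro w hwim hw
  by_contra hne
  set S := semicircleStieltjes z with hS
  have hfac : (w - S) * (w + S + z) = 0 := by
    linear_combination hw - hquad
  rcases mul_eq_zero.mp hfac with h | h
  · exact hne (by linear_combination h)
  · have hwS : w * S = 1 := by linear_combination S * h - hquad
    have hS0 : S ≠ 0 := by
      intro h0
      rw [h0, mul_zero] at hwS
      exact one_ne_zero hwS.symm
    have hSw : S = w⁻¹ := eq_inv_of_mul_eq_one_left (by rw [mul_comm] at hwS; exact hwS)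
    have : S.im < 0 := by
      rw [hSw, Complex.inv_im]
      have h1 : 0 < Complex.normSq w := Complex.normSq_pos.mpr (by
        intro h0
        rw [h0] at hwim
        simp at hwim)
      rw [neg_div]
      simp only [neg_neg, Left.neg_neg_iff]
      positivity
    linarith [him]
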